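/- Let A and B be n×n real symmetric positive definite matrices, put S = (A+B)/2 and M = √(S⁻¹) · ((A−B)/2) · √(S⁻¹), and note that M is symmetric; let l₁,…,lₙ be the eigenvalues of M with multiplicity. Then each l_j lies in the open interval (−1, 1), and det(A+B)² · ∏_{j=1}^n (1 − l_j²) = 4^n · det(A) · det(B). -/

import Mathlib

open scoped ComplexOrder in
/-- The positive semidefinite square root of a positive semidefinite matrix
(the definition `Matrix.PosSemidef.sqrt` of Mathlib, December 2024, removed since). -/
noncomputable def Matrix.PosSemidef.sqrt {n : Type*} [Fintype n] [DecidableEq n] {𝕜 : Type*}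
    [RCLike 𝕜] {A : Matrix n n 𝕜} (hA : A.PosSemidef) : Matrix n n 𝕜 :=
  hA.1.eigenvectorUnitary.1 * Matrix.diagonal ((↑) ∘ (√·) ∘ hA.1.eigenvalues) *
  (star hA.1.eigenvectorUnitary : Matrix n n 𝕜)

open Matrix

lemma herm_spec' {n : ℕ} {A : Matrix (Fin n) (Fin n) ℝ} (hA : A.IsHermitian) :
    A = (hA.eigenvectorUnitary : Matrix (Fin n) (Fin n) ℝ) *
      diagonal (RCLike.ofReal ∘ hA.eigenvalues) * star (hA.eigenvectorUnitary : Matrix (Fin n) (Fin n) ℝ) := by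
  have h := hA.spectral_theorem
  rw [Unitary.conjStarAlgAut_apply] at h
  exact h

lemma sqrt_mul_self' {n : ℕ} {A : Matrix (Fin n) (Fin n) ℝ} (hA : A.PosSemidef) :
    hA.sqrt * hA.sqrt = A := by
  have hUU : star (hA.1.eigenvectorUnitary : Matrix (Fin n) (Fin n) ℝ) * hA.1.eigenvectorUnitary = 1 :=
    Matrix.mem_unitaryGroup_iff'.mp hA.1.eigenvectorUnitary.2
  unfold Matrix.PosSemidef.sqrt
  conv_rhs => rw [herm_spec' hA.1]
  calc _ = (hA.1.eigenvectorUnitary : Matrix (Fin n) (Fin n) ℝ) *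
        (diagonal (RCLike.ofReal ∘ (√·) ∘ hA.1.eigenvalues) *
          (star (hA.1.eigenvectorUnitary : Matrix (Fin n) (Fin n) ℝ) * (hA.1.eigenvectorUnitary : Matrix (Fin n) (Fin n) ℝ)) *
          diagonal (RCLike.ofReal ∘ (√·) ∘ hA.1.eigenvalues)) *
        star (hA.1.eigenvectorUnitary : Matrix (Fin n) (Fin n) ℝ) := by
          simp only [Matrix.mul_assoc]
    _ = _ := by
      rw [hUU, Matrix.mul_one, diagonal_mul_diagonal]
      congr 3
      funext i
      simp [Real.mul_self_sqrt (hA.eigenvalues_nonneg i)]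

lemma sqrt_herm' {n : ℕ} {A : Matrix (Fin n) (Fin n) ℝ} (hA : A.PosSemidef) :
    hA.sqrt.IsHermitian := by
  unfold Matrix.PosSemidef.sqrt
  rw [star_eq_conjTranspose]
  exact isHermitian_mul_mul_conjTranspose _ (isHermitian_diagonal_of_self_adjoint _
    (by ext i; simp))


/-- For `A`, `B` real symmetric positive definite, with `S = (A+B)/2` and
`M = √(S⁻¹)·((A−B)/2)·√(S⁻¹)` (which is symmetric, hence Hermitian), with eigenvalues
`l₁, …, lₙ` (with multiplicity): each `l_j ∈ (−1, 1)` and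
`det (A+B)² · ∏ⱼ (1 − l_j²) = 4^n · det A · det B`. -/

theorem bartlett_det_identity {n : ℕ} (A B : Matrix (Fin n) (Fin n) ℝ)
    (hA : A.PosDef) (hB : B.PosDef)
    (S M : Matrix (Fin n) (Fin n) ℝ)
    (hS : S = (2 : ℝ)⁻¹ • (A + B)) (hSpd : S.PosDef)
    (hM : M = hSpd.inv.posSemidef.sqrt * ((2 : ℝ)⁻¹ • (A - B)) * hSpd.inv.posSemidef.sqrt)
    (hMh : M.IsHermitian) :
    (∀ j, hMh.eigenvalues j ∈ Set.Ioo (-1 : ℝ) 1) ∧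
      (A + B).det ^ 2 * ∏ j, (1 - hMh.eigenvalues j ^ 2) =
        4 ^ n * A.det * B.det := by
  set Q := hSpd.inv.posSemidef.sqrt with hQ
  have hQh : Q.IsHermitian := sqrt_herm' hSpd.inv.posSemidef
  have hQQ : Q * Q = S⁻¹ := sqrt_mul_self' hSpd.inv.posSemidef
  have hSdet : S.det ≠ 0 := hSpd.det_pos.ne'
  have hQQdet : (Q * Q).det = S.det⁻¹ := by
    rw [hQQ, Matrix.det_nonsing_inv, Ring.inverse_eq_inv']
  have hQdet : Q.det ≠ 0 := by
    intro h
    have : (Q * Q).det = 0 := by rw [Matrix.det_mul, h, mul_zero]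
    rw [hQQdet] at this
    exact hSdet (by simpa using inv_eq_zero.mp this)
  have hQSQ : Q * S * Q = 1 := by
    have hS' : S = (Q * Q)⁻¹ := by
      rw [hQQ, Matrix.nonsing_inv_nonsing_inv _ (isUnit_iff_ne_zero.mpr hSdet)]
    rw [hS', Matrix.mul_inv_rev, show Q * (Q⁻¹ * Q⁻¹) * Q = Q * Q⁻¹ * (Q⁻¹ * Q) by
      simp only [Matrix.mul_assoc], Matrix.mul_nonsing_inv _ (isUnit_iff_ne_zero.mpr hQdet),
      Matrix.nonsing_inv_mul _ (isUnit_iff_ne_zero.mpr hQdet), one_mul]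
  have hsub : S - (2 : ℝ)⁻¹ • (A - B) = B := by rw [hS]; module
  have hadd : S + (2 : ℝ)⁻¹ • (A - B) = A := by rw [hS]; module
  have h1sub : 1 - M = Q * B * Q := by
    rw [← hsub, Matrix.mul_sub, Matrix.sub_mul, hQSQ, hM]
  have h1add : 1 + M = Q * A * Q := by
    rw [← hadd, Matrix.mul_add, Matrix.add_mul, hQSQ, hM]
  -- congruence positivity
  have key : ∀ (C : Matrix (Fin n) (Fin n) ℝ), C.PosDef → ∀ v : Fin n → ℝ, v ≠ 0 →
      0 < dotProduct (star v) ((Q * C * Q) *ᵥ v) := by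
    intro C hC v hv
    have hQt : Qᵀ = Q := hQh
    have hQv : Q *ᵥ v ≠ 0 := by
      intro h
      apply hv
      have : Q⁻¹ *ᵥ (Q *ᵥ v) = v := by
        rw [Matrix.mulVec_mulVec, Matrix.nonsing_inv_mul _ (isUnit_iff_ne_zero.mpr hQdet), Matrix.one_mulVec]
      rw [h, Matrix.mulVec_zero] at this
      exact this.symm
    have hpos := hC.dotProduct_mulVec_pos hQv
    have : dotProduct (star v) ((Q * C * Q) *ᵥ v) = dotProduct (star (Q *ᵥ v)) (C *ᵥ (Q *ᵥ v)) := by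
      simp only [star_trivial, ← Matrix.mulVec_mulVec]
      have hvQ : v ᵥ* Q = Q *ᵥ v := by rw [← Matrix.vecMul_transpose, hQt]
      rw [dotProduct_mulVec v Q, hvQ]
    rw [this]
    exact hpos
  -- eigenvalue bounds
  have hbound : ∀ j, hMh.eigenvalues j ∈ Set.Ioo (-1 : ℝ) 1 := by
    intro j
    set v : Fin n → ℝ := ⇑(hMh.eigenvectorBasis j) with hv
    have hvne : v ≠ 0 := by
      intro h
      apply hMh.eigenvectorBasis.orthonormal.ne_zero j
      ext i
      exact congrFun h i
    have hvv : 0 < dotProduct v v := by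
      have := dotProduct_star_self_pos_iff (v := v)
      simpa using this.mpr hvne
    have hev : M *ᵥ v = hMh.eigenvalues j • v := hMh.mulVec_eigenvectorBasis j
    have h1 : 0 < (1 - hMh.eigenvalues j) * (dotProduct v v) := by
      have := key B hB v hvne
      rw [← h1sub] at this
      simpa [Matrix.sub_mulVec, Matrix.one_mulVec, hev, dotProduct_sub,
        dotProduct_smul, sub_mul, smul_eq_mul] using this
    have h2 : 0 < (1 + hMh.eigenvalues j) * (dotProduct v v) := by
      have := key A hA v hvne
      rw [← h1add] at this
      simpa [Matrix.add_mulVec, Matrix.one_mulVec, hev, dotProduct_add,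
        dotProduct_smul, add_mul, smul_eq_mul] using this
    constructor
    · nlinarith
    · nlinarith
  refine ⟨hbound, ?_⟩
  -- determinant identity
  set U : Matrix (Fin n) (Fin n) ℝ := (hMh.eigenvectorUnitary : Matrix (Fin n) (Fin n) ℝ) with hU
  have hUU : U * star U = 1 := Matrix.mem_unitaryGroup_iff.mp hMh.eigenvectorUnitary.2
  have hconj : ∀ X : Matrix (Fin n) (Fin n) ℝ, (U * X * star U).det = X.det := by
    intro X
    have hUU' : star U * U = 1 := Matrix.mem_unitaryGroup_iff'.mp hMh.eigenvectorUnitary.2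
    rw [Matrix.det_mul, Matrix.det_mul, mul_comm, ← mul_assoc, ← Matrix.det_mul, hUU']
    simp
  have hdet1 : (1 - M).det = ∏ j, (1 - hMh.eigenvalues j) := by
    have h : 1 - M = U * (1 - Matrix.diagonal (RCLike.ofReal ∘ hMh.eigenvalues)) * star U := by
      rw [Matrix.mul_sub, Matrix.sub_mul, Matrix.mul_one, hUU, ← herm_spec' hMh]
    rw [h, hconj]
    rw [show (1 : Matrix (Fin n) (Fin n) ℝ) = Matrix.diagonal (fun _ => 1) from
      (Matrix.diagonal_one).symm, Matrix.diagonal_sub, Matrix.det_diagonal]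
    simp
  have hdet2 : (1 + M).det = ∏ j, (1 + hMh.eigenvalues j) := by
    have h : 1 + M = U * (1 + Matrix.diagonal (RCLike.ofReal ∘ hMh.eigenvalues)) * star U := by
      rw [Matrix.mul_add, Matrix.add_mul, Matrix.mul_one, hUU, ← herm_spec' hMh]
    rw [h, hconj]
    rw [show (1 : Matrix (Fin n) (Fin n) ℝ) = Matrix.diagonal (fun _ => 1) from
      (Matrix.diagonal_one).symm, Matrix.diagonal_add, Matrix.det_diagonal]
    simp
  have hprod : ∏ j, (1 - hMh.eigenvalues j ^ 2) = (1 - M).det * (1 + M).det := by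
    rw [hdet1, hdet2, ← Finset.prod_mul_distrib]
    exact Finset.prod_congr rfl fun j _ => by ring
  have hd1 : (1 - M).det = S.det⁻¹ * B.det := by
    rw [h1sub, Matrix.det_mul, Matrix.det_mul, ← hQQdet, Matrix.det_mul]
    ring
  have hd2 : (1 + M).det = S.det⁻¹ * A.det := by
    rw [h1add, Matrix.det_mul, Matrix.det_mul, ← hQQdet, Matrix.det_mul]
    ring
  have hSdet' : S.det = (2 : ℝ)⁻¹ ^ n * (A + B).det := by
    rw [hS, Matrix.det_smul, Fintype.card_fin]
  have habne : (A + B).det ≠ 0 := (hA.add hB).det_pos.ne'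
  rw [hprod, hd1, hd2, hSdet']
  have h2n : ((2 : ℝ) ^ n) ≠ 0 := by positivity
  have h4 : (2 : ℝ) ^ n * 2 ^ n = 4 ^ n := by
    rw [← pow_add, ← two_mul, pow_mul]; norm_num
  field_simp
  rw [← h4]; ring_nf; rw [mul_assoc _ ((1 / 2 : ℝ) ^ (n * 2)), ← mul_pow]; norm_num
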